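/- Suppose ℛ₁ is a random subset of {1,…,m} that is a measurable function of (P₁,P₂) such that, for almost every fixed value p₂ of P₂, the conditional probability given P₂=p₂ that ℛ₁ contains some feature j with H_{1j}=0 is at most α₁; and symmetrically ℛ₂ is a random subset such that for almost every fixed value p₁ of P₁, the conditional probability given P₁=p₁ that ℛ₂ contains some feature j with H_{2j}=0 is at most α₂ = α−α₁. Then the rejection set ℛ = ℛ₁ ∩ ℛ₂ has FWER for replicability analysis at most α; that is, Pr(ℛ contains some feature j with (H_{1j},H_{2j}) ≠ (1,1)) ≤ α. (Theorem 1, abstract form: a two-stage procedure whose first-stage rules control FWER conditionally on the other study yields FWER control for replicability.) -/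

import Mathlib

open MeasureTheory ProbabilityTheory

/-- Theorem 1, abstract form. Two studies examine `m` features with
p-value vectors `P1, P2 : Ω → Fin m → ℝ` and null indicators `H1, H2 : Fin m → Bool`
(`false` means the feature is null in that study; feature `j` is a replicability null
when `H1 j = false ∨ H2 j = false`).  Suppose `R1` is a random subset of the features,
measurable with respect to `(P1, P2)`, such that for almost every value of `P2` the
conditional probability given `P2` that `R1` contains some feature `j` with `H1 j = false`
is at most `α₁`; and symmetrically `R2` with bound `α − α₁` conditionally on `P1`.
Then the rejection set `R1 ∩ R2` has FWER for replicability analysis at most `α`. -/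

lemma aux_measure_le_of_condexp_le {Ω : Type*} {m' : MeasurableSpace Ω} [m0 : MeasurableSpace Ω]
    (μ : Measure Ω) [IsProbabilityMeasure μ] (hm : m' ≤ m0)
    {A : Set Ω} (hA : MeasurableSet[m0] A) {c : ℝ}
    (h : ∀ᵐ ω ∂μ, (μ[A.indicator (fun _ => (1:ℝ)) | m']) ω ≤ c) :
    μ A ≤ ENNReal.ofReal c := by
  have hint : Integrable (A.indicator fun _ => (1:ℝ)) μ :=
    (integrable_const 1).indicator hA
  have h1 : ∫ ω, (μ[A.indicator (fun _ => (1:ℝ)) | m']) ω ∂μ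
      = ∫ ω, A.indicator (fun _ => (1:ℝ)) ω ∂μ := integral_condExp hm
  have h2 : ∫ ω, A.indicator (fun _ => (1:ℝ)) ω ∂μ = (μ A).toReal := by
    simpa [Measure.real] using integral_indicator_const (μ := μ) (1:ℝ) hA
  have h3 : ∫ ω, (μ[A.indicator (fun _ => (1:ℝ)) | m']) ω ∂μ ≤ ∫ _ω, c ∂μ :=
    integral_mono_ae integrable_condExp (integrable_const c) h
  have h4 : (μ A).toReal ≤ c := by
    simpa [h1, h2] using h3
  calc μ A = ENNReal.ofReal (μ A).toReal := by
        rw [ENNReal.ofReal_toReal (measure_ne_top μ A)]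
    _ ≤ ENNReal.ofReal c := ENNReal.ofReal_le_ofReal h4

theorem fwer_replicability_of_conditional_control
    {Ω : Type*} [MeasurableSpace Ω] (μ : Measure Ω) [IsProbabilityMeasure μ]
    (m : ℕ) (P1 P2 : Ω → Fin m → ℝ) (hP1 : Measurable P1) (hP2 : Measurable P2)
    (H1 H2 : Fin m → Bool)
    (R1 R2 : Ω → Set (Fin m))
    (hR1meas : ∀ j, MeasurableSet[MeasurableSpace.comap (fun ω => (P1 ω, P2 ω)) inferInstance]
      {ω | j ∈ R1 ω})
    (hR2meas : ∀ j, MeasurableSet[MeasurableSpace.comap (fun ω => (P1 ω, P2 ω)) inferInstance]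
      {ω | j ∈ R2 ω})
    (α α₁ : ℝ) (hα : α ∈ Set.Ioo (0:ℝ) 1) (hα₁ : α₁ ∈ Set.Ioo (0:ℝ) α)
    (hcond1 : ∀ᵐ ω ∂μ,
      (μ[Set.indicator {ω' | ∃ j, H1 j = false ∧ j ∈ R1 ω'} (fun _ => (1:ℝ)) |
        MeasurableSpace.comap P2 inferInstance]) ω ≤ α₁)
    (hcond2 : ∀ᵐ ω ∂μ,
      (μ[Set.indicator {ω' | ∃ j, H2 j = false ∧ j ∈ R2 ω'} (fun _ => (1:ℝ)) |
        MeasurableSpace.comap P1 inferInstance]) ω ≤ α - α₁) :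
    μ {ω | ∃ j, (H1 j = false ∨ H2 j = false) ∧ j ∈ R1 ω ∧ j ∈ R2 ω}
      ≤ ENNReal.ofReal α := by
  set A := {ω' | ∃ j, H1 j = false ∧ j ∈ R1 ω'} with hAdef
  set B := {ω' | ∃ j, H2 j = false ∧ j ∈ R2 ω'} with hBdef
  have hcomap : MeasurableSpace.comap (fun ω => (P1 ω, P2 ω)) inferInstance ≤ ‹MeasurableSpace Ω› :=
    (hP1.prodMk hP2).comap_le
  have hA : MeasurableSet A := by
    have : A = ⋃ j ∈ {j : Fin m | H1 j = false}, {ω | j ∈ R1 ω} := by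
      ext ω; simp only [hAdef, Set.mem_setOf_eq, Set.mem_iUnion, exists_prop]
    rw [this]
    exact MeasurableSet.biUnion (Set.to_countable _) (fun j _ => hcomap _ (hR1meas j))
  have hB : MeasurableSet B := by
    have : B = ⋃ j ∈ {j : Fin m | H2 j = false}, {ω | j ∈ R2 ω} := by
      ext ω; simp only [hBdef, Set.mem_setOf_eq, Set.mem_iUnion, exists_prop]
    rw [this]
    exact MeasurableSet.biUnion (Set.to_countable _) (fun j _ => hcomap _ (hR2meas j))
  have hmA : μ A ≤ ENNReal.ofReal α₁ :=
    aux_measure_le_of_condexp_le μ (MeasurableSpace.comap_le_iff_le_map.mpr hP2.le_map) hA hcond1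
  have hmB : μ B ≤ ENNReal.ofReal (α - α₁) :=
    aux_measure_le_of_condexp_le μ (MeasurableSpace.comap_le_iff_le_map.mpr hP1.le_map) hB hcond2
  have hsub : {ω | ∃ j, (H1 j = false ∨ H2 j = false) ∧ j ∈ R1 ω ∧ j ∈ R2 ω} ⊆ A ∪ B := by
    rintro ω ⟨j, hj, hj1, hj2⟩
    rcases hj with h | h
    · exact Or.inl ⟨j, h, hj1⟩
    · exact Or.inr ⟨j, h, hj2⟩
  calc μ {ω | ∃ j, (H1 j = false ∨ H2 j = false) ∧ j ∈ R1 ω ∧ j ∈ R2 ω}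
      ≤ μ (A ∪ B) := measure_mono hsub
    _ ≤ μ A + μ B := measure_union_le A B
    _ ≤ ENNReal.ofReal α₁ + ENNReal.ofReal (α - α₁) := add_le_add hmA hmB
    _ = ENNReal.ofReal α := by
        rw [← ENNReal.ofReal_add hα₁.1.le (by linarith [hα₁.2])]
        ring_nf
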